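/- Assume φ ∈ (0,1), ω > 0, μ > 0, b > 0 and r := bφ − μ(1−φ) > 0. Set l := e^{−μ(1−φ)ω}, ρ* := (1 − e^{μ(1−φ)ω − bφω})/(1 − e^{−bφω}), and define M : [0,∞) → ℝ by M(y) = e^{rω} y / (1 + l(e^{bφω} − 1) y). Then for every y > 0 the iterates M^k(y) converge to ρ* as k → ∞. (The map M is the Poincaré map of the logistic equation with seasonal succession, and ρ* is its globally attracting positive fixed point.) -/

import Mathlib

/-- When `r = bφ - μ(1-φ) > 0`, the iterates of the Poincaré map
`M y = e^{rω} y / (1 + l(e^{bφω} - 1) y)` of the seasonal logistic equation converge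
to the globally attracting positive fixed point `ρ*` for every `y > 0`. -/
theorem stmt_2 (φ ω μ b r l ρs : ℝ)
    (hφ0 : 0 < φ) (hφ1 : φ < 1) (hω : 0 < ω) (hμ : 0 < μ) (hb : 0 < b)
    (hr : r = b * φ - μ * (1 - φ)) (hrpos : 0 < r)
    (hl : l = Real.exp (-(μ * (1 - φ) * ω)))
    (hρs : ρs = (1 - Real.exp (μ * (1 - φ) * ω - b * φ * ω)) /
      (1 - Real.exp (-(b * φ * ω))))
    (M : ℝ → ℝ)
    (hM : ∀ y : ℝ, 0 ≤ y →
      M y = Real.exp (r * ω) * y / (1 + l * (Real.exp (b * φ * ω) - 1) * y)) :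
    ∀ y : ℝ, 0 < y →
      Filter.Tendsto (fun k : ℕ => M^[k] y) Filter.atTop (nhds ρs) := by
  intro y hy
  set A : ℝ := Real.exp (r * ω) with hAdef
  set B : ℝ := l * (Real.exp (b * φ * ω) - 1) with hBdef
  have hv : 0 < b * φ * ω := by positivity
  have hA1 : 1 < A := Real.one_lt_exp_iff.mpr (by positivity)
  have hA0 : 0 < A := lt_trans one_pos hA1
  have hB : 0 < B := by
    rw [hBdef, hl]
    have h1 : 1 < Real.exp (b * φ * ω) := Real.one_lt_exp_iff.mpr hv
    have h2 := Real.exp_pos (-(μ * (1 - φ) * ω))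
    nlinarith
  have hρ : ρs = (A - 1) / B := by
    have hE := Real.exp_pos (b * φ * ω)
    have hF := Real.exp_pos (μ * (1 - φ) * ω)
    have hE1 : 1 < Real.exp (b * φ * ω) := Real.one_lt_exp_iff.mpr hv
    have hrω : r * ω = b * φ * ω - μ * (1 - φ) * ω := by rw [hr]; ring
    have hd1 : (1 : ℝ) - (Real.exp (b * φ * ω))⁻¹ ≠ 0 := by
      have : (Real.exp (b * φ * ω))⁻¹ < 1 := inv_lt_one_of_one_lt₀ hE1
      linarith
    have hd2 : (Real.exp (μ * (1 - φ) * ω))⁻¹ * (Real.exp (b * φ * ω) - 1) ≠ 0 :=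
      (mul_pos (inv_pos.mpr hF) (by linarith)).ne'
    rw [hρs, hBdef, hl, hAdef, hrω, Real.exp_sub, Real.exp_sub, Real.exp_neg,
      Real.exp_neg, div_eq_div_iff hd1 hd2]
    field_simp
  have key : ∀ k : ℕ, 0 < M^[k] y ∧
      M^[k] y = (A ^ k * (y * (A - 1))) / ((A - 1) + B * y * (A ^ k - 1)) := by
    intro k
    induction k with
    | zero =>
      refine ⟨hy, ?_⟩
      simp only [Function.iterate_zero, id_eq, pow_zero]
      rw [sub_self, mul_zero, add_zero, one_mul, mul_div_assoc,
        div_self (by linarith), mul_one]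
    | succ k ih =>
      obtain ⟨hpos, hform⟩ := ih
      have hAk : (0:ℝ) < A ^ k := pow_pos hA0 k
      have hAk1 : (1:ℝ) ≤ A ^ k := one_le_pow₀ hA1.le
      have hAk1' : (1:ℝ) ≤ A ^ (k+1) := one_le_pow₀ hA1.le
      have hD : 0 < (A - 1) + B * y * (A ^ k - 1) := by
        nlinarith [mul_nonneg (mul_nonneg hB.le hy.le) (sub_nonneg.mpr hAk1)]
      have hD' : 0 < (A - 1) + B * y * (A ^ (k+1) - 1) := by
        nlinarith [mul_nonneg (mul_nonneg hB.le hy.le) (sub_nonneg.mpr hAk1')]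
      have hstep : M^[k+1] y = A * (M^[k] y) / (1 + B * (M^[k] y)) := by
        rw [Function.iterate_succ_apply', hM _ hpos.le]
      have hden : 0 < 1 + B * (M^[k] y) := by nlinarith
      constructor
      · rw [hstep]; positivity
      · rw [hstep, hform]
        rw [div_eq_div_iff (by rw [← hform]; exact hden.ne') hD'.ne']
        field_simp [show A - 1 + y * B * (A ^ k - 1) ≠ 0 by rw [mul_comm y B]; exact hD.ne']
        ring
  have h2 : ∀ k : ℕ, M^[k] y =
      (y * (A - 1)) / ((A - 1 - B * y) * (1 / A) ^ k + B * y) := by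
    intro k
    obtain ⟨hpos, hform⟩ := key k
    have hAk : (0:ℝ) < A ^ k := pow_pos hA0 k
    have hAk1 : (1:ℝ) ≤ A ^ k := one_le_pow₀ hA1.le
    have hD : 0 < (A - 1) + B * y * (A ^ k - 1) := by
      nlinarith [mul_nonneg (mul_nonneg hB.le hy.le) (sub_nonneg.mpr hAk1)]
    have hden : (A - 1 - B * y) * (1 / A) ^ k + B * y
        = ((A - 1) + B * y * (A ^ k - 1)) / A ^ k := by
      rw [one_div, inv_pow, eq_div_iff hAk.ne']
      field_simp
      ring
    rw [hform, hden, div_div_eq_mul_div]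
    ring_nf
  rw [hρ]
  have hpow : Filter.Tendsto (fun k : ℕ => (1 / A : ℝ) ^ k) Filter.atTop (nhds 0) :=
    tendsto_pow_atTop_nhds_zero_of_lt_one (by positivity) ((div_lt_one hA0).mpr hA1)
  have hdlim : Filter.Tendsto (fun k : ℕ => (A - 1 - B * y) * (1 / A) ^ k + B * y)
      Filter.atTop (nhds (B * y)) := by
    have := (hpow.const_mul (A - 1 - B * y)).add_const (B * y)
    simpa using this
  have hfin : Filter.Tendsto (fun k : ℕ => (y * (A - 1)) / ((A - 1 - B * y) * (1 / A) ^ k + B * y))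
      Filter.atTop (nhds ((y * (A - 1)) / (B * y))) :=
    Filter.Tendsto.div tendsto_const_nhds hdlim (by positivity)
  have hval : (y * (A - 1)) / (B * y) = (A - 1) / B := by
    rw [mul_comm B y, ← div_div, mul_comm y (A-1), mul_div_assoc, div_self hy.ne', mul_one]
  rw [← hval]
  exact hfin.congr (fun k => (h2 k).symm)
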